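/- Let γ > 0 and α > 0. For μ > 0 set κ₊ = sqrt( sqrt(μ⁴ + γ⁴/4) + γ²/2 ), κ₋ = sqrt( sqrt(μ⁴ + γ⁴/4) − γ²/2 ), and let A_μ be the 4×4 complex matrix with rows ( e^{−κ₊π}, 1, 1, 1 ), ( 1, e^{−κ₊π}, e^{iκ₋π}, e^{−iκ₋π} ), ( (ακ₊−1)e^{−κ₊π}, ακ₊+1, −ακ₋−i, −ακ₋+i ), ( ακ₊+1, (ακ₊−1)e^{−κ₊π}, (−ακ₋+i)e^{iκ₋π}, (−ακ₋−i)e^{−iκ₋π} ). Then there exist C > 0 and μ₀ > 0 such that |det A_μ − 8i·α²·μ²·sin(μπ)| ≤ C·μ for all μ ≥ μ₀. -/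

import Mathlib

open Real Complex

noncomputable def kappaP (γ μ : ℝ) : ℝ :=
  Real.sqrt (Real.sqrt (μ ^ 4 + γ ^ 4 / 4) + γ ^ 2 / 2)

noncomputable def kappaM (γ μ : ℝ) : ℝ :=
  Real.sqrt (Real.sqrt (μ ^ 4 + γ ^ 4 / 4) - γ ^ 2 / 2)

/-- The matrix encoding the boundary conditions imposed on the general solution
of the eigenvalue equation for `L̄ = −∂t⁴ + γ²∂t²` on `[0,π]`. -/
noncomputable def Amat (γ α μ : ℝ) : Matrix (Fin 4) (Fin 4) ℂ :=
  let κp := kappaP γ μ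
  let κm := kappaM γ μ
  !![((Real.exp (-κp * π) : ℝ) : ℂ), 1, 1, 1;
     1, ((Real.exp (-κp * π) : ℝ) : ℂ),
       Complex.exp (Complex.I * ((κm * π : ℝ) : ℂ)),
       Complex.exp (-Complex.I * ((κm * π : ℝ) : ℂ));
     (((α * κp - 1) * Real.exp (-κp * π) : ℝ) : ℂ), ((α * κp + 1 : ℝ) : ℂ),
       -((α * κm : ℝ) : ℂ) - Complex.I, -((α * κm : ℝ) : ℂ) + Complex.I;
     ((α * κp + 1 : ℝ) : ℂ), (((α * κp - 1) * Real.exp (-κp * π) : ℝ) : ℂ),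
       (-((α * κm : ℝ) : ℂ) + Complex.I) * Complex.exp (Complex.I * ((κm * π : ℝ) : ℂ)),
       (-((α * κm : ℝ) : ℂ) - Complex.I) * Complex.exp (-Complex.I * ((κm * π : ℝ) : ℂ))]

set_option maxHeartbeats 1000000 in
lemma detAux (p e f a b i : ℂ) (hi : i ^ 2 = -1) :
    (!![p, 1, 1, 1;
        1, p, e, f;
        (a - 1) * p, a + 1, -b - i, -b + i;
        a + 1, (a - 1) * p, (-b + i) * e, (-b - i) * f] : Matrix (Fin 4) (Fin 4) ℂ).det
    = (a + b) ^ 2 * (e - f)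
      + (-2 * i) * (e + f)
      + 2 * a * ((e - f) - i * (e + f))
      + 2 * b * ((e - f) - i * (e + f))
      + 4 * p * i * (1 + e * f)
      + (-2 * i) * p ^ 2 * (e + f)
      + 2 * p ^ 2 * (a + b) * ((e - f) + i * (e + f))
      + p ^ 2 * (a + b) ^ 2 * (f - e) := by
  simp [Matrix.det_succ_row_zero, Fin.sum_univ_succ, Fin.succAbove, Matrix.det_fin_one,
    Fin.castSucc, Fin.castAdd, Fin.castLE, Matrix.cons_val_succ]
  linear_combination ((1 - p^2)*(e - f)) * hi

set_option maxHeartbeats 1000000 in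
/-- Determinant asymptotics: `det A_μ = 8i α² μ² sin(μπ) + O(μ)`. -/
theorem stmt13 (γ α : ℝ) (hγ : 0 < γ) (hα : 0 < α) :
    ∃ C > 0, ∃ μ₀ > 0, ∀ μ ≥ μ₀,
      ‖(Amat γ α μ).det
          - 8 * Complex.I * (α : ℂ) ^ 2 * (μ : ℂ) ^ 2 * ((Real.sin (μ * π) : ℝ) : ℂ)‖
        ≤ C * μ := by
  have hπ : (3:ℝ) < π := Real.pi_gt_three
  refine ⟨4*α^2*(γ^4+π*γ^2) + 16 + 8*α*(1+γ) + 8*α + 8*α*(2+γ) + 8*α^2 + 16, by positivity,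
    1, one_pos, ?_⟩
  intro μ hμ
  have hμ0 : 0 < μ := lt_of_lt_of_le one_pos hμ
  -- real preliminaries
  set S : ℝ := Real.sqrt (μ ^ 4 + γ ^ 4 / 4) with hSdef
  have hS2 : S ^ 2 = μ ^ 4 + γ ^ 4 / 4 := Real.sq_sqrt (by positivity)
  have hSnn : 0 ≤ S := Real.sqrt_nonneg _
  have hμ2 : (0:ℝ) < μ ^ 2 := by positivity
  have hg2 : (0:ℝ) < γ ^ 2 / 2 := by positivity
  have hμ1 : (1:ℝ) ≤ μ ^ 2 := by nlinarith only [hμ]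
  have hSmu : μ ^ 2 ≤ S := by nlinarith only [hS2, hSnn, hμ2, sq_nonneg (γ ^ 2)]
  have hSg : γ ^ 2 / 2 ≤ S := by nlinarith only [hS2, hSnn, hg2, sq_nonneg (μ ^ 2)]
  set κp : ℝ := kappaP γ μ with hkpdef
  set κm : ℝ := kappaM γ μ with hkmdef
  have hkpeq : κp = Real.sqrt (S + γ ^ 2 / 2) := rfl
  have hkmeq : κm = Real.sqrt (S - γ ^ 2 / 2) := rfl
  have hkpnn : 0 ≤ κp := Real.sqrt_nonneg _
  have hkmnn : 0 ≤ κm := Real.sqrt_nonneg _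
  have hkp2 : κp ^ 2 = S + γ ^ 2 / 2 := by rw [hkpeq]; exact Real.sq_sqrt (by positivity)
  have hkm2 : κm ^ 2 = S - γ ^ 2 / 2 := by rw [hkmeq]; exact Real.sq_sqrt (by linarith)
  have hprod : κp * κm = μ ^ 2 := by
    rw [hkpeq, hkmeq, ← Real.sqrt_mul (by positivity)]
    have h : (S + γ ^ 2 / 2) * (S - γ ^ 2 / 2) = (μ ^ 2) ^ 2 := by linear_combination hS2
    rw [h, Real.sqrt_sq (sq_nonneg μ)]
  have hSle : S ≤ μ ^ 2 + γ ^ 2 / 2 := by nlinarith only [hS2, hSnn, hμ2, hg2, mul_pos hμ2 hg2]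
  have hkmle : κm ≤ μ := by nlinarith only [hkm2, hSle, hkmnn, hμ0, hg2]
  have hkpge : μ ≤ κp := by nlinarith only [hkp2, hSmu, hkpnn, hμ0, hg2]
  have hkple : κp ≤ μ + γ := by
    nlinarith only [hkp2, hSle, hkpnn, hμ0, hγ, mul_pos hμ0 hγ, add_pos hμ0 hγ, hg2]
  have hSkey : (S - μ ^ 2) * (S + μ ^ 2) = γ ^ 4 / 4 := by linear_combination hS2
  have hS1 : (2:ℝ) ≤ S + μ ^ 2 := by linarith only [hSmu, hμ1]
  have hSub : S - μ ^ 2 ≤ γ ^ 4 := by nlinarith only [hSkey, hS1, sq_nonneg (γ ^ 2), hSmu]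
  have hgap : (μ - κm) * (2 * μ) ≤ γ ^ 2 := by
    have hp : κm * κm ≤ μ * κm := mul_le_mul_of_nonneg_right hkmle hkmnn
    linarith only [hkm2, hSmu, hp]
  -- complex atoms
  set P : ℂ := ((Real.exp (-κp * π) : ℝ) : ℂ) with hPdef
  set E : ℂ := Complex.exp (Complex.I * ((κm * π : ℝ) : ℂ)) with hEdef
  set F : ℂ := Complex.exp (-Complex.I * ((κm * π : ℝ) : ℂ)) with hFdef
  set A : ℂ := ((α : ℝ) : ℂ) * ((κp : ℝ) : ℂ) with hAdef
  set B : ℂ := ((α : ℝ) : ℂ) * ((κm : ℝ) : ℂ) with hBdef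
  have habsE : ‖E‖ = 1 := by rw [hEdef, Complex.norm_exp]; simp
  have habsF : ‖F‖ = 1 := by rw [hFdef, Complex.norm_exp]; simp
  have habsP : ‖P‖ = Real.exp (-κp * π) := by
    rw [hPdef, Complex.norm_real, Real.norm_eq_abs, _root_.abs_of_pos (Real.exp_pos _)]
  have hPle : ‖P‖ ≤ 1 := by
    rw [habsP]
    exact Real.exp_le_one_iff.mpr
      (by linarith only [mul_nonneg hkpnn Real.pi_pos.le])
  have hPnn : 0 ≤ ‖P‖ := norm_nonneg P
  have hP2le : ‖P‖ ^ 2 ≤ 1 := by nlinarith only [hPle, hPnn]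
  have hPk : ‖P‖ * κp ≤ 1 := by
    rw [habsP, show -κp * π = -(κp * π) from neg_mul _ _, Real.exp_neg,
      inv_mul_le_iff₀ (Real.exp_pos _), mul_one]
    have h1 : κp * π + 1 ≤ Real.exp (κp * π) := Real.add_one_le_exp _
    have h2 : (0:ℝ) ≤ κp * (π - 1) := mul_nonneg hkpnn (by linarith only [hπ])
    linarith only [h1, h2]
  have habsA : ‖A‖ = α * κp := by
    rw [hAdef, norm_mul, Complex.norm_real, Real.norm_eq_abs, Complex.norm_real, Real.norm_eq_abs,
      _root_.abs_of_pos hα, _root_.abs_of_nonneg hkpnn]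
  have habsB : ‖B‖ = α * κm := by
    rw [hBdef, norm_mul, Complex.norm_real, Real.norm_eq_abs, Complex.norm_real, Real.norm_eq_abs,
      _root_.abs_of_pos hα, _root_.abs_of_nonneg hkmnn]
  have habsAB : ‖A + B‖ = α * (κp + κm) := by
    have h : A + B = ((α * (κp + κm) : ℝ) : ℂ) := by rw [hAdef, hBdef]; push_cast; ring
    rw [h, Complex.norm_real, Real.norm_eq_abs, _root_.abs_of_nonneg (by positivity)]
  have hEmF : ‖E - F‖ ≤ 2 := by
    calc ‖E - F‖ ≤ ‖E‖ + ‖F‖ := norm_sub_le E F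
    _ = 2 := by rw [habsE, habsF]; norm_num
  have hEpF : ‖E + F‖ ≤ 2 := by
    calc ‖E + F‖ ≤ ‖E‖ + ‖F‖ := norm_add_le E F
    _ = 2 := by rw [habsE, habsF]; norm_num
  -- E - F = 2i sin(κm π)
  have hEF : E - F = 2 * Complex.I * ((Real.sin (κm * π) : ℝ) : ℂ) := by
    rw [hEdef, hFdef]
    have h1 : Complex.I * ((κm * π : ℝ) : ℂ) = ((κm * π : ℝ) : ℂ) * Complex.I := by ring
    have h2 : -Complex.I * ((κm * π : ℝ) : ℂ) = ((-(κm * π) : ℝ) : ℂ) * Complex.I := by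
      push_cast; ring
    rw [h1, h2, Complex.exp_mul_I, Complex.exp_mul_I]
    rw [← Complex.ofReal_sin, ← Complex.ofReal_cos, ← Complex.ofReal_sin, ← Complex.ofReal_cos,
      Real.sin_neg, Real.cos_neg]
    push_cast; ring
  -- determinant identity
  have hdet : (Amat γ α μ).det =
      (A + B) ^ 2 * (E - F)
      + (-2 * Complex.I) * (E + F)
      + 2 * A * ((E - F) - Complex.I * (E + F))
      + 2 * B * ((E - F) - Complex.I * (E + F))
      + 4 * P * Complex.I * (1 + E * F)
      + (-2 * Complex.I) * P ^ 2 * (E + F)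
      + 2 * P ^ 2 * (A + B) * ((E - F) + Complex.I * (E + F))
      + P ^ 2 * (A + B) ^ 2 * (F - E) := by
    have hm : Amat γ α μ = !![P, 1, 1, 1;
        1, P, E, F;
        (A - 1) * P, A + 1, -B - Complex.I, -B + Complex.I;
        A + 1, (A - 1) * P, (-B + Complex.I) * E, (-B - Complex.I) * F] := by
      rw [hAdef, hBdef, hPdef, hEdef, hFdef]
      simp only [Amat]
      rw [← hkpdef, ← hkmdef]
      ext i j
      fin_cases i <;> fin_cases j <;> simp <;> push_cast <;> ring
    rw [hm]
    exact detAux P E F A B Complex.I Complex.I_sq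
  -- main term estimate
  set x : ℝ := (α * (κp + κm)) ^ 2 * Real.sin (κm * π) - 4 * α ^ 2 * μ ^ 2 * Real.sin (μ * π)
    with hxdef
  have hT1eq : (A + B) ^ 2 * (E - F)
      - 8 * Complex.I * (α : ℂ) ^ 2 * (μ : ℂ) ^ 2 * ((Real.sin (μ * π) : ℝ) : ℂ)
      = 2 * Complex.I * ((x : ℝ) : ℂ) := by
    rw [hEF, hAdef, hBdef, hxdef]; push_cast; ring
  have hsin1 : |Real.sin (κm * π)| ≤ 1 := Real.abs_sin_le_one _
  have hsin2 : |Real.sin (κm * π) - Real.sin (μ * π)| ≤ |κm * π - μ * π| := by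
    have h := Real.sin_sub_sin (κm * π) (μ * π)
    rw [h, _root_.abs_mul, _root_.abs_mul]
    calc |2| * |Real.sin ((κm * π - μ * π) / 2)| * |Real.cos ((κm * π + μ * π) / 2)|
        ≤ |2| * |(κm * π - μ * π) / 2| * 1 := by
          apply mul_le_mul (mul_le_mul_of_nonneg_left Real.abs_sin_le_abs (abs_nonneg 2))
            (Real.abs_cos_le_one _) (abs_nonneg _) (by positivity)
      _ = |κm * π - μ * π| := by rw [_root_.abs_div, _root_.abs_two]; ring
  have hx : |x| ≤ α ^ 2 * (2 * γ ^ 4 + 2 * π * γ ^ 2 * μ) := by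
    have hxsplit : x = α ^ 2 * (((κp + κm) ^ 2 - 4 * μ ^ 2) * Real.sin (κm * π)
        + 4 * μ ^ 2 * (Real.sin (κm * π) - Real.sin (μ * π))) := by
      rw [hxdef]; ring
    have hd : (κp + κm) ^ 2 - 4 * μ ^ 2 = 2 * (S - μ ^ 2) := by
      linear_combination hkp2 + hkm2 + 2 * hprod
    have hsin2' : |Real.sin (κm * π) - Real.sin (μ * π)| ≤ π * (μ - κm) := by
      refine le_trans hsin2 ?_
      have h : |κm * π - μ * π| = π * (μ - κm) := by
        rw [_root_.abs_of_nonpos (by linarith only [mul_nonneg (sub_nonneg.mpr hkmle) Real.pi_pos.le] :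
          κm * π - μ * π ≤ 0)]; ring
      rw [h]
    have h1 : |((κp + κm) ^ 2 - 4 * μ ^ 2) * Real.sin (κm * π)| ≤ 2 * γ ^ 4 := by
      rw [_root_.abs_mul, hd, _root_.abs_of_nonneg (by linarith : (0:ℝ) ≤ 2 * (S - μ ^ 2))]
      calc 2 * (S - μ ^ 2) * |Real.sin (κm * π)| ≤ 2 * (S - μ ^ 2) * 1 :=
            mul_le_mul_of_nonneg_left hsin1 (by linarith)
        _ ≤ 2 * γ ^ 4 := by linarith
    have h2 : |4 * μ ^ 2 * (Real.sin (κm * π) - Real.sin (μ * π))| ≤ 2 * π * γ ^ 2 * μ := by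
      rw [_root_.abs_mul, _root_.abs_of_nonneg (by positivity : (0:ℝ) ≤ 4 * μ ^ 2)]
      have hb : π * (μ - κm) ≤ π * γ ^ 2 / (2 * μ) := by
        rw [le_div_iff₀ (by positivity)]
        calc π * (μ - κm) * (2 * μ) = π * ((μ - κm) * (2 * μ)) := by ring
          _ ≤ π * γ ^ 2 := mul_le_mul_of_nonneg_left hgap Real.pi_pos.le
      calc 4 * μ ^ 2 * |Real.sin (κm * π) - Real.sin (μ * π)|
          ≤ 4 * μ ^ 2 * (π * γ ^ 2 / (2 * μ)) :=
            mul_le_mul_of_nonneg_left (le_trans hsin2' hb) (by positivity)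
        _ = 2 * π * γ ^ 2 * μ := by field_simp; ring
    rw [hxsplit, _root_.abs_mul, _root_.abs_of_nonneg (sq_nonneg α)]
    refine mul_le_mul_of_nonneg_left ?_ (sq_nonneg α)
    calc |((κp + κm) ^ 2 - 4 * μ ^ 2) * Real.sin (κm * π)
          + 4 * μ ^ 2 * (Real.sin (κm * π) - Real.sin (μ * π))|
        ≤ |((κp + κm) ^ 2 - 4 * μ ^ 2) * Real.sin (κm * π)|
          + |4 * μ ^ 2 * (Real.sin (κm * π) - Real.sin (μ * π))| := abs_add_le _ _
      _ ≤ 2 * γ ^ 4 + 2 * π * γ ^ 2 * μ := by linarith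
  -- term bounds
  have bT1 : ‖(A + B) ^ 2 * (E - F)
      - 8 * Complex.I * (α : ℂ) ^ 2 * (μ : ℂ) ^ 2 * ((Real.sin (μ * π) : ℝ) : ℂ)‖
      ≤ 4 * α ^ 2 * (γ ^ 4 + π * γ ^ 2) * μ := by
    rw [hT1eq, norm_mul, norm_mul, Complex.norm_two, Complex.norm_I, Complex.norm_real, Real.norm_eq_abs, mul_one]
    have hmono : α ^ 2 * γ ^ 4 ≤ α ^ 2 * γ ^ 4 * μ := by
      linarith only [mul_nonneg (mul_nonneg (sq_nonneg α) (pow_nonneg hγ.le 4))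
        (sub_nonneg.mpr hμ)]
    calc 2 * |x| ≤ 2 * (α ^ 2 * (2 * γ ^ 4 + 2 * π * γ ^ 2 * μ)) := by linarith only [hx]
      _ = 4 * (α ^ 2 * γ ^ 4) + 4 * π * α ^ 2 * γ ^ 2 * μ := by ring
      _ ≤ 4 * (α ^ 2 * γ ^ 4 * μ) + 4 * π * α ^ 2 * γ ^ 2 * μ := by linarith only [hmono]
      _ = 4 * α ^ 2 * (γ ^ 4 + π * γ ^ 2) * μ := by ring
  have h2I : ‖-2 * Complex.I‖ = 2 := by
    rw [norm_mul, norm_neg, Complex.norm_two, Complex.norm_I, mul_one]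
  have bT2 : ‖(-2 * Complex.I) * (E + F)‖ ≤ 4 := by
    rw [norm_mul, h2I]; linarith
  have hmid : ‖(E - F) - Complex.I * (E + F)‖ ≤ 4 := by
    calc ‖(E - F) - Complex.I * (E + F)‖
        ≤ ‖E - F‖ + ‖Complex.I * (E + F)‖ := norm_sub_le _ _
      _ ≤ 2 + 2 := by rw [norm_mul, Complex.norm_I, one_mul]; exact add_le_add hEmF hEpF
      _ = 4 := by norm_num
  have hmid2 : ‖(E - F) + Complex.I * (E + F)‖ ≤ 4 := by
    calc ‖(E - F) + Complex.I * (E + F)‖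
        ≤ ‖E - F‖ + ‖Complex.I * (E + F)‖ := norm_add_le _ _
      _ ≤ 2 + 2 := by rw [norm_mul, Complex.norm_I, one_mul]; exact add_le_add hEmF hEpF
      _ = 4 := by norm_num
  have bT3 : ‖2 * A * ((E - F) - Complex.I * (E + F))‖ ≤ 8 * α * (μ + γ) := by
    rw [norm_mul, norm_mul, Complex.norm_two, habsA]
    calc 2 * (α * κp) * ‖(E - F) - Complex.I * (E + F)‖
        ≤ 2 * (α * κp) * 4 := mul_le_mul_of_nonneg_left hmid (by positivity)
      _ = 8 * (α * κp) := by ring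
      _ ≤ 8 * α * (μ + γ) := by
          have := mul_le_mul_of_nonneg_left hkple hα.le
          linarith
  have bT4 : ‖2 * B * ((E - F) - Complex.I * (E + F))‖ ≤ 8 * α * μ := by
    rw [norm_mul, norm_mul, Complex.norm_two, habsB]
    calc 2 * (α * κm) * ‖(E - F) - Complex.I * (E + F)‖
        ≤ 2 * (α * κm) * 4 := mul_le_mul_of_nonneg_left hmid (by positivity)
      _ = 8 * (α * κm) := by ring
      _ ≤ 8 * α * μ := by
          have := mul_le_mul_of_nonneg_left hkmle hα.le
          linarith
  have bT5 : ‖4 * P * Complex.I * (1 + E * F)‖ ≤ 8 := by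
    rw [norm_mul, norm_mul, norm_mul, Complex.norm_I]
    have h1 : ‖1 + E * F‖ ≤ 2 := by
      calc ‖1 + E * F‖ ≤ ‖1‖ + ‖E * F‖ :=
        norm_add_le _ _
      _ = 2 := by rw [norm_one, norm_mul, habsE, habsF]; norm_num
    have h4 : ‖(4:ℂ)‖ = 4 := by norm_num
    rw [h4, mul_one]
    calc 4 * ‖P‖ * ‖1 + E * F‖ ≤ 4 * 1 * 2 := by
          apply mul_le_mul _ h1 (norm_nonneg _) (by norm_num)
          linarith
      _ = 8 := by norm_num
  have bT6 : ‖(-2 * Complex.I) * P ^ 2 * (E + F)‖ ≤ 4 := by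
    rw [norm_mul, norm_mul, norm_pow, h2I]
    have h := mul_le_mul hP2le hEpF (norm_nonneg _) zero_le_one
    calc 2 * ‖P‖ ^ 2 * ‖E + F‖
        = 2 * (‖P‖ ^ 2 * ‖E + F‖) := by ring
      _ ≤ 2 * (1 * 2) := by linarith
      _ = 4 := by norm_num
  have bT7 : ‖2 * P ^ 2 * (A + B) * ((E - F) + Complex.I * (E + F))‖
      ≤ 8 * α * (2 + γ) * μ := by
    rw [norm_mul, norm_mul, norm_mul, Complex.norm_two, norm_pow, habsAB]
    have hk : α * (κp + κm) ≤ α * (2 * μ + γ) := by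
      apply mul_le_mul_of_nonneg_left _ hα.le
      linarith
    have hABnn : (0:ℝ) ≤ α * (κp + κm) := by positivity
    calc 2 * ‖P‖ ^ 2 * (α * (κp + κm)) * ‖(E - F) + Complex.I * (E + F)‖
        ≤ 2 * 1 * (α * (2 * μ + γ)) * 4 := by
          apply mul_le_mul _ hmid2 (norm_nonneg _) (by positivity)
          apply mul_le_mul _ hk hABnn (by positivity)
          linarith
      _ = 8 * α * (2 * μ + γ) := by ring
      _ ≤ 8 * α * (2 + γ) * μ := by
          linarith only [mul_nonneg (mul_nonneg hα.le hγ.le) (sub_nonneg.mpr hμ)]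
  have bT8 : ‖P ^ 2 * (A + B) ^ 2 * (F - E)‖ ≤ 8 * α ^ 2 := by
    rw [norm_mul, norm_mul, norm_pow, norm_pow, habsAB]
    have hFE : ‖F - E‖ ≤ 2 := by
      calc ‖F - E‖ ≤ ‖F‖ + ‖E‖ := norm_sub_le F E
      _ = 2 := by rw [habsE, habsF]; norm_num
    have key : ‖P‖ ^ 2 * (α * (κp + κm)) ^ 2 ≤ 4 * α ^ 2 := by
      have h0 : (0:ℝ) ≤ ‖P‖ * (α * (κp + κm)) := by positivity
      have h1 : ‖P‖ * (α * (κp + κm)) ≤ 2 * α := by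
        calc ‖P‖ * (α * (κp + κm)) ≤ ‖P‖ * (α * (2 * κp)) := by
              apply mul_le_mul_of_nonneg_left _ hPnn
              apply mul_le_mul_of_nonneg_left _ hα.le
              linarith
          _ = 2 * α * (‖P‖ * κp) := by ring
          _ ≤ 2 * α * 1 := mul_le_mul_of_nonneg_left hPk (by positivity)
          _ = 2 * α := by ring
      calc ‖P‖ ^ 2 * (α * (κp + κm)) ^ 2
          = (‖P‖ * (α * (κp + κm))) ^ 2 := by ring
        _ ≤ (2 * α) ^ 2 := by nlinarith only [h0, h1]
        _ = 4 * α ^ 2 := by ring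
    calc ‖P‖ ^ 2 * (α * (κp + κm)) ^ 2 * ‖F - E‖
        ≤ 4 * α ^ 2 * 2 := mul_le_mul key hFE (norm_nonneg _) (by positivity)
      _ = 8 * α ^ 2 := by ring
  -- assemble
  have hsplit : (Amat γ α μ).det
      - 8 * Complex.I * (α : ℂ) ^ 2 * (μ : ℂ) ^ 2 * ((Real.sin (μ * π) : ℝ) : ℂ)
      = ((A + B) ^ 2 * (E - F)
          - 8 * Complex.I * (α : ℂ) ^ 2 * (μ : ℂ) ^ 2 * ((Real.sin (μ * π) : ℝ) : ℂ))
        + (-2 * Complex.I) * (E + F)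
        + 2 * A * ((E - F) - Complex.I * (E + F))
        + 2 * B * ((E - F) - Complex.I * (E + F))
        + 4 * P * Complex.I * (1 + E * F)
        + (-2 * Complex.I) * P ^ 2 * (E + F)
        + 2 * P ^ 2 * (A + B) * ((E - F) + Complex.I * (E + F))
        + P ^ 2 * (A + B) ^ 2 * (F - E) := by
    rw [hdet]; ring
  rw [hsplit]
  have tri : ∀ z w : ℂ, ‖z + w‖ ≤ ‖z‖ + ‖w‖ :=
    fun z w => norm_add_le z w
  have total : ‖((A + B) ^ 2 * (E - F)
          - 8 * Complex.I * (α : ℂ) ^ 2 * (μ : ℂ) ^ 2 * ((Real.sin (μ * π) : ℝ) : ℂ))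
        + (-2 * Complex.I) * (E + F)
        + 2 * A * ((E - F) - Complex.I * (E + F))
        + 2 * B * ((E - F) - Complex.I * (E + F))
        + 4 * P * Complex.I * (1 + E * F)
        + (-2 * Complex.I) * P ^ 2 * (E + F)
        + 2 * P ^ 2 * (A + B) * ((E - F) + Complex.I * (E + F))
        + P ^ 2 * (A + B) ^ 2 * (F - E)‖
      ≤ 4 * α ^ 2 * (γ ^ 4 + π * γ ^ 2) * μ + 4 + 8 * α * (μ + γ) + 8 * α * μ + 8 + 4
        + 8 * α * (2 + γ) * μ + 8 * α ^ 2 := by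
    refine le_trans (tri _ _) (add_le_add (le_trans (tri _ _) (add_le_add
      (le_trans (tri _ _) (add_le_add (le_trans (tri _ _) (add_le_add (le_trans (tri _ _)
      (add_le_add (le_trans (tri _ _) (add_le_add (le_trans (tri _ _)
      (add_le_add bT1 bT2)) bT3)) bT4)) bT5)) bT6)) bT7)) bT8)
  refine le_trans total ?_
  have e1 : 8 * α * (μ + γ) ≤ 8 * α * (1 + γ) * μ := by
    linarith only [mul_nonneg (mul_nonneg hα.le hγ.le) (sub_nonneg.mpr hμ)]
  have e2 : 8 * α ^ 2 ≤ 8 * α ^ 2 * μ := by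
    linarith only [mul_nonneg (sq_nonneg α) (sub_nonneg.mpr hμ)]
  have e3 : (16:ℝ) ≤ 16 * μ := by linarith only [hμ]
  linarith only [e1, e2, e3, hμ]
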